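/- For every odd integer d ≥ 1, the Diophantine equation a² + b² + c² = 3d² has a solution in integers with 0 < a ≤ b ≤ c and gcd(a,b,c) = 1. -/

import Mathlib

section ThreeSquaresAux

/-- First component of `w̄ v w` for `w = r+si+tj+uk`, `v = xi+yj+zk`. -/
def qA (r s t u x y z : ℤ) : ℤ :=
  (r^2 + s^2 - t^2 - u^2) * x + (2*(s*t + r*u)) * y + (2*(s*u - r*t)) * z

def qB (r s t u x y z : ℤ) : ℤ :=
  (2*(s*t - r*u)) * x + (r^2 - s^2 + t^2 - u^2) * y + (2*(t*u + r*s)) * z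

def qC (r s t u x y z : ℤ) : ℤ :=
  (2*(s*u + r*t)) * x + (2*(t*u - r*s)) * y + (r^2 - s^2 - t^2 + u^2) * z

lemma q_norm (r s t u x y z : ℤ) :
    (qA r s t u x y z)^2 + (qB r s t u x y z)^2 + (qC r s t u x y z)^2 =
      (r^2 + s^2 + t^2 + u^2)^2 * (x^2 + y^2 + z^2) := by
  simp only [qA, qB, qC]; ring

lemma q_back_x (r s t u x y z : ℤ) :
    (r^2 + s^2 - t^2 - u^2) * qA r s t u x y z + (2*(s*t - r*u)) * qB r s t u x y z +
      (2*(s*u + r*t)) * qC r s t u x y z = (r^2 + s^2 + t^2 + u^2)^2 * x := by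
  simp only [qA, qB, qC]; ring

lemma q_back_y (r s t u x y z : ℤ) :
    (2*(s*t + r*u)) * qA r s t u x y z + (r^2 - s^2 + t^2 - u^2) * qB r s t u x y z +
      (2*(t*u - r*s)) * qC r s t u x y z = (r^2 + s^2 + t^2 + u^2)^2 * y := by
  simp only [qA, qB, qC]; ring

lemma q_back_z (r s t u x y z : ℤ) :
    (2*(s*u - r*t)) * qA r s t u x y z + (2*(t*u + r*s)) * qB r s t u x y z +
      (r^2 - s^2 - t^2 + u^2) * qC r s t u x y z = (r^2 + s^2 + t^2 + u^2)^2 * z := by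
  simp only [qA, qB, qC]; ring

lemma dvd_of_dvd_two_mul {p x : ℤ} (hp : Prime p) (h2 : ¬ p ∣ 2) (h : p ∣ 2 * x) :
    p ∣ x := (hp.dvd_mul.mp h).resolve_left h2

lemma row_dvd {p m1 m2 m3 x y z : ℤ} (hp : Prime p) (h2 : ¬ p ∣ 2)
    (hA : p ∣ m1 * x + m2 * y + m3 * z)
    (hB : p ∣ m1 * x - m2 * y - m3 * z)
    (hC : p ∣ m1 * x - m2 * y + m3 * z) :
    p ∣ m1 * x ∧ p ∣ m2 * y ∧ p ∣ m3 * z := by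
  have e1 : m1 * x + m2 * y + m3 * z + (m1 * x - m2 * y - m3 * z) = 2 * (m1 * x) := by ring
  have e2 : m1 * x + m2 * y + m3 * z - (m1 * x - m2 * y + m3 * z) = 2 * (m2 * y) := by ring
  have e3 : m1 * x - m2 * y + m3 * z - (m1 * x - m2 * y - m3 * z) = 2 * (m3 * z) := by ring
  refine ⟨dvd_of_dvd_two_mul hp h2 ?_, dvd_of_dvd_two_mul hp h2 ?_,
    dvd_of_dvd_two_mul hp h2 ?_⟩
  · rw [← e1]; exact dvd_add hA hB
  · rw [← e2]; exact dvd_sub hA hC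
  · rw [← e3]; exact dvd_sub hC hB

lemma rowA {p r s t u x y z : ℤ} (hp : Prime p) (h2 : ¬ p ∣ 2)
    (h1 : p ∣ qA r s t u x y z) (h2' : p ∣ qA r s t u x (-y) (-z))
    (h3 : p ∣ qA r s t u x (-y) z) :
    p ∣ (r^2 + s^2 - t^2 - u^2) * x ∧ p ∣ (2*(s*t + r*u)) * y ∧ p ∣ (2*(s*u - r*t)) * z := by
  apply row_dvd hp h2
  · simpa only [qA] using h1
  · have e : qA r s t u x (-y) (-z) =
      (r^2 + s^2 - t^2 - u^2) * x - (2*(s*t + r*u)) * y - (2*(s*u - r*t)) * z := by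
      simp only [qA]; ring
    rwa [e] at h2'
  · have e : qA r s t u x (-y) z =
      (r^2 + s^2 - t^2 - u^2) * x - (2*(s*t + r*u)) * y + (2*(s*u - r*t)) * z := by
      simp only [qA]; ring
    rwa [e] at h3

lemma rowB {p r s t u x y z : ℤ} (hp : Prime p) (h2 : ¬ p ∣ 2)
    (h1 : p ∣ qB r s t u x y z) (h2' : p ∣ qB r s t u x (-y) (-z))
    (h3 : p ∣ qB r s t u x (-y) z) :
    p ∣ (2*(s*t - r*u)) * x ∧ p ∣ (r^2 - s^2 + t^2 - u^2) * y ∧ p ∣ (2*(t*u + r*s)) * z := by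
  apply row_dvd hp h2
  · simpa only [qB] using h1
  · have e : qB r s t u x (-y) (-z) =
      (2*(s*t - r*u)) * x - (r^2 - s^2 + t^2 - u^2) * y - (2*(t*u + r*s)) * z := by
      simp only [qB]; ring
    rwa [e] at h2'
  · have e : qB r s t u x (-y) z =
      (2*(s*t - r*u)) * x - (r^2 - s^2 + t^2 - u^2) * y + (2*(t*u + r*s)) * z := by
      simp only [qB]; ring
    rwa [e] at h3

lemma rowC {p r s t u x y z : ℤ} (hp : Prime p) (h2 : ¬ p ∣ 2)
    (h1 : p ∣ qC r s t u x y z) (h2' : p ∣ qC r s t u x (-y) (-z))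
    (h3 : p ∣ qC r s t u x (-y) z) :
    p ∣ (2*(s*u + r*t)) * x ∧ p ∣ (2*(t*u - r*s)) * y ∧ p ∣ (r^2 - s^2 - t^2 + u^2) * z := by
  apply row_dvd hp h2
  · simpa only [qC] using h1
  · have e : qC r s t u x (-y) (-z) =
      (2*(s*u + r*t)) * x - (2*(t*u - r*s)) * y - (r^2 - s^2 - t^2 + u^2) * z := by
      simp only [qC]; ring
    rwa [e] at h2'
  · have e : qC r s t u x (-y) z =
      (2*(s*u + r*t)) * x - (2*(t*u - r*s)) * y + (r^2 - s^2 - t^2 + u^2) * z := by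
      simp only [qC]; ring
    rwa [e] at h3

lemma dvd_of_three {p m a b c : ℤ} (hp : Prime p)
    (hg : Int.gcd (Int.gcd a b) c = 1)
    (h1 : p ∣ m * a) (h2 : p ∣ m * b) (h3 : p ∣ m * c) : p ∣ m := by
  rcases hp.dvd_mul.mp h1 with h | ha
  · exact h
  rcases hp.dvd_mul.mp h2 with h | hb
  · exact h
  rcases hp.dvd_mul.mp h3 with h | hc
  · exact h
  exfalso
  have hab : p ∣ (Int.gcd a b : ℤ) := Int.dvd_coe_gcd ha hb
  have : p ∣ ((Int.gcd (Int.gcd a b) c : ℕ) : ℤ) := Int.dvd_coe_gcd hab hc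
  rw [hg] at this
  exact hp.not_unit (isUnit_of_dvd_one (by exact_mod_cast this))

/-- If an odd prime divides all nine rotation-matrix entries, it divides `r,s,t,u`. -/
lemma all_entries_dvd {p r s t u : ℤ} (hp : Prime p) (h2 : ¬ p ∣ 2)
    (h11 : p ∣ r^2 + s^2 - t^2 - u^2)
    (h12 : p ∣ 2*(s*t + r*u)) (h13 : p ∣ 2*(s*u - r*t))
    (h21 : p ∣ 2*(s*t - r*u)) (h22 : p ∣ r^2 - s^2 + t^2 - u^2)
    (h23 : p ∣ 2*(t*u + r*s)) (h31 : p ∣ 2*(s*u + r*t))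
    (h32 : p ∣ 2*(t*u - r*s)) (h33 : p ∣ r^2 - s^2 - t^2 + u^2) :
    p ∣ r ∧ p ∣ s ∧ p ∣ t ∧ p ∣ u := by
  have half : ∀ {w : ℤ}, p ∣ 2 * w → p ∣ w := fun h => dvd_of_dvd_two_mul hp h2 h
  have hst : p ∣ s * t := by
    have h := dvd_add h12 h21
    have e : 2*(s*t + r*u) + 2*(s*t - r*u) = 2 * (2 * (s*t)) := by ring
    exact half (half (by rwa [e] at h))
  have hru : p ∣ r * u := by
    have h := dvd_sub h12 h21
    have e : 2*(s*t + r*u) - 2*(s*t - r*u) = 2 * (2 * (r*u)) := by ring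
    exact half (half (by rwa [e] at h))
  have hsu : p ∣ s * u := by
    have h := dvd_add h13 h31
    have e : 2*(s*u - r*t) + 2*(s*u + r*t) = 2 * (2 * (s*u)) := by ring
    exact half (half (by rwa [e] at h))
  have hrt : p ∣ r * t := by
    have h := dvd_sub h31 h13
    have e : 2*(s*u + r*t) - 2*(s*u - r*t) = 2 * (2 * (r*t)) := by ring
    exact half (half (by rwa [e] at h))
  have htu : p ∣ t * u := by
    have h := dvd_add h23 h32
    have e : 2*(t*u + r*s) + 2*(t*u - r*s) = 2 * (2 * (t*u)) := by ring
    exact half (half (by rwa [e] at h))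
  have hrs : p ∣ r * s := by
    have h := dvd_sub h23 h32
    have e : 2*(t*u + r*s) - 2*(t*u - r*s) = 2 * (2 * (r*s)) := by ring
    exact half (half (by rwa [e] at h))
  have hrs2 : p ∣ r^2 - s^2 := by
    have h := dvd_add h22 h33
    have e : (r^2 - s^2 + t^2 - u^2) + (r^2 - s^2 - t^2 + u^2) = 2 * (r^2 - s^2) := by ring
    exact half (by rwa [e] at h)
  have hrt2 : p ∣ r^2 - t^2 := by
    have h := dvd_add h11 h33
    have e : (r^2 + s^2 - t^2 - u^2) + (r^2 - s^2 - t^2 + u^2) = 2 * (r^2 - t^2) := by ring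
    exact half (by rwa [e] at h)
  have hru2 : p ∣ r^2 - u^2 := by
    have h := dvd_add h11 h22
    have e : (r^2 + s^2 - t^2 - u^2) + (r^2 - s^2 + t^2 - u^2) = 2 * (r^2 - u^2) := by ring
    exact half (by rwa [e] at h)
  by_cases hr : p ∣ r
  · have hr2 : p ∣ r^2 := dvd_pow hr two_ne_zero
    have hs : p ∣ s := by
      have : p ∣ s^2 := by
        have h := dvd_sub hr2 hrs2
        have e : r^2 - (r^2 - s^2) = s^2 := by ring
        rwa [e] at h
      exact hp.dvd_of_dvd_pow this
    have ht : p ∣ t := by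
      have : p ∣ t^2 := by
        have h := dvd_sub hr2 hrt2
        have e : r^2 - (r^2 - t^2) = t^2 := by ring
        rwa [e] at h
      exact hp.dvd_of_dvd_pow this
    have hu : p ∣ u := by
      have : p ∣ u^2 := by
        have h := dvd_sub hr2 hru2
        have e : r^2 - (r^2 - u^2) = u^2 := by ring
        rwa [e] at h
      exact hp.dvd_of_dvd_pow this
    exact ⟨hr, hs, ht, hu⟩
  · exfalso
    have hs : p ∣ s := (hp.dvd_mul.mp hrs).resolve_left hr
    have hs2 : p ∣ s^2 := dvd_pow hs two_ne_zero
    have hr2 : p ∣ r^2 := by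
      have h := dvd_add hrs2 hs2
      have e : r^2 - s^2 + s^2 = r^2 := by ring
      rwa [e] at h
    exact hr (hp.dvd_of_dvd_pow hr2)

lemma grot (a b c : ℤ) : Int.gcd (Int.gcd b c) a = Int.gcd (Int.gcd a b) c := by
  rw [Int.gcd_comm ((Int.gcd b c : ℕ) : ℤ) a, ← Int.gcd_assoc]

lemma gswap (a b c : ℤ) : Int.gcd (Int.gcd b a) c = Int.gcd (Int.gcd a b) c := by
  rw [Int.gcd_comm b a]

lemma gneg2 (a b c : ℤ) : Int.gcd (Int.gcd a (-b)) (-c) = Int.gcd (Int.gcd a b) c := by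
  simp [Int.gcd, Int.natAbs_neg]

lemma gneg1 (a b c : ℤ) : Int.gcd (Int.gcd a (-b)) c = Int.gcd (Int.gcd a b) c := by
  simp [Int.gcd, Int.natAbs_neg]

/-- Core existence result: for odd `n` there are coprime `x,y,z` with
`x²+y²+z² = 3n²`. -/
lemma inner_three_squares : ∀ n : ℕ, Odd n →
    ∃ x y z : ℤ, Int.gcd (Int.gcd x y) z = 1 ∧ x^2 + y^2 + z^2 = 3 * (n:ℤ)^2 := by
  intro n
  induction n using Nat.strong_induction_on with
  | _ n ih =>
  intro hodd
  rcases eq_or_ne n 1 with rfl | hn1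
  · exact ⟨1, 1, 1, by decide, by norm_num⟩
  have hn0 : n ≠ 0 := by rintro rfl; exact (by decide : ¬ Odd 0) hodd
  set p := n.minFac with hp_def
  have hp : p.Prime := Nat.minFac_prime hn1
  have hpdvd : p ∣ n := Nat.minFac_dvd n
  obtain ⟨d', hd'⟩ := hpdvd
  have hd'odd : Odd d' := (Nat.odd_mul.mp (hd' ▸ hodd)).2
  have hd'pos : 0 < d' := hd'odd.pos
  have hd'lt : d' < n := by
    have hplt : 1 < p := hp.one_lt
    calc d' = 1 * d' := (one_mul d').symm
    _ < p * d' := by exact (Nat.mul_lt_mul_right hd'pos).mpr hplt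
    _ = n := hd'.symm
  obtain ⟨a, b, c, hgabc, habc⟩ := ih d' hd'lt hd'odd
  obtain ⟨r0, s0, t0, u0, hrstu⟩ := Nat.sum_four_squares p
  set r : ℤ := (r0 : ℤ) with hr_def
  set s : ℤ := (s0 : ℤ) with hs_def
  set t : ℤ := (t0 : ℤ) with ht_def
  set u : ℤ := (u0 : ℤ) with hu_def
  have hN : r^2 + s^2 + t^2 + u^2 = (p:ℤ) := by
    rw [hr_def, hs_def, ht_def, hu_def]; exact_mod_cast hrstu
  have hp2 : p ≠ 2 := by
    intro h
    rw [h] at hd'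
    rcases hodd with ⟨j, hj⟩
    omega
  have hpZ : Prime (p:ℤ) := Nat.prime_iff_prime_int.mp hp
  have h2Z : ¬ (p:ℤ) ∣ 2 := by
    intro h
    have h' : p ∣ 2 := by exact_mod_cast h
    have := (Nat.prime_dvd_prime_iff_eq hp Nat.prime_two).mp h'
    exact hp2 this
  have key : ∃ x y z : ℤ,
      (Int.gcd (Int.gcd x y) z = 1 ∧ x^2 + y^2 + z^2 = 3 * (d':ℤ)^2) ∧
      Int.gcd (Int.gcd (qA r s t u x y z) (qB r s t u x y z)) (qC r s t u x y z) = 1 := by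
    by_contra hcon
    push_neg at hcon
    have H : ∀ x y z : ℤ, Int.gcd (Int.gcd x y) z = 1 → x^2 + y^2 + z^2 = 3 * (d':ℤ)^2 →
        (p:ℤ) ∣ qA r s t u x y z ∧ (p:ℤ) ∣ qB r s t u x y z ∧ (p:ℤ) ∣ qC r s t u x y z := by
      intro x y z hg hxyz
      have hne := hcon x y z ⟨hg, hxyz⟩
      set A := qA r s t u x y z with hA_def
      set B := qB r s t u x y z with hB_def
      set C := qC r s t u x y z with hC_def
      have hGne0 : Int.gcd (Int.gcd A B) C ≠ 0 := by
        intro h0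
        obtain ⟨hAB, hC0⟩ := Int.gcd_eq_zero_iff.mp h0
        have hAB' : Int.gcd A B = 0 := by exact_mod_cast hAB
        obtain ⟨hA0, hB0⟩ := Int.gcd_eq_zero_iff.mp hAB'
        have hq := q_norm r s t u x y z
        rw [← hA_def, ← hB_def, ← hC_def, hA0, hB0, hC0, hN, hxyz] at hq
        have hd'pos' : (0:ℤ) < (d':ℤ) := by exact_mod_cast hd'pos
        have hppos : (0:ℤ) < (p:ℤ) := by exact_mod_cast hp.pos
        have hpos : (0:ℤ) < (p:ℤ)^2 * (3 * (d':ℤ)^2) :=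
          mul_pos (pow_pos hppos 2) (mul_pos zero_lt_three (pow_pos hd'pos' 2))
        exact absurd (by simpa using hq.symm) hpos.ne'
      obtain ⟨l, hlp, hldvd⟩ := Nat.exists_prime_and_dvd hne
      have hlZ : Prime (l:ℤ) := Nat.prime_iff_prime_int.mp hlp
      have hlG : (l:ℤ) ∣ ((Int.gcd (Int.gcd A B) C : ℕ) : ℤ) :=
        Int.natCast_dvd_natCast.mpr hldvd
      have hlC : (l:ℤ) ∣ C := hlG.trans (Int.gcd_dvd_right _ _)
      have hlAB : (l:ℤ) ∣ ((Int.gcd A B : ℕ) : ℤ) := hlG.trans (Int.gcd_dvd_left _ _)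
      have hlA : (l:ℤ) ∣ A := hlAB.trans (Int.gcd_dvd_left _ _)
      have hlB : (l:ℤ) ∣ B := hlAB.trans (Int.gcd_dvd_right _ _)
      by_cases hl_eq : l = p
      · subst hl_eq; exact ⟨hlA, hlB, hlC⟩
      · exfalso
        have hlx : (l:ℤ) ∣ (p:ℤ)^2 * x := by
          rw [← hN, ← q_back_x r s t u x y z]
          exact dvd_add (dvd_add (hlA.mul_left _) (hlB.mul_left _)) (hlC.mul_left _)
        have hly : (l:ℤ) ∣ (p:ℤ)^2 * y := by
          rw [← hN, ← q_back_y r s t u x y z]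
          exact dvd_add (dvd_add (hlA.mul_left _) (hlB.mul_left _)) (hlC.mul_left _)
        have hlz : (l:ℤ) ∣ (p:ℤ)^2 * z := by
          rw [← hN, ← q_back_z r s t u x y z]
          exact dvd_add (dvd_add (hlA.mul_left _) (hlB.mul_left _)) (hlC.mul_left _)
        have hlnp : ¬ (l:ℤ) ∣ (p:ℤ)^2 := by
          intro h
          have h' : l ∣ p^2 := by exact_mod_cast h
          have : l ∣ p := hlp.dvd_of_dvd_pow h'
          exact hl_eq ((Nat.prime_dvd_prime_iff_eq hlp hp).mp this)
        have hx := (hlZ.dvd_mul.mp hlx).resolve_left hlnp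
        have hy := (hlZ.dvd_mul.mp hly).resolve_left hlnp
        have hz := (hlZ.dvd_mul.mp hlz).resolve_left hlnp
        have : (l:ℤ) ∣ ((Int.gcd (Int.gcd x y) z : ℕ) : ℤ) :=
          Int.dvd_coe_gcd (Int.dvd_coe_gcd hx hy) hz
        rw [hg] at this
        exact hlZ.not_unit (isUnit_of_dvd_one (by exact_mod_cast this))
    -- the nine variants
    -- arrangement 1 : (a,b,c)
    have g1 : Int.gcd (Int.gcd a b) c = 1 := hgabc
    have n1 : a^2 + b^2 + c^2 = 3 * (d':ℤ)^2 := habc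
    have g2 : Int.gcd (Int.gcd b c) a = 1 := by rw [grot]; exact hgabc
    have n2 : b^2 + c^2 + a^2 = 3 * (d':ℤ)^2 := by linear_combination habc
    have g3 : Int.gcd (Int.gcd c a) b = 1 := by rw [grot, grot]; exact hgabc
    have n3 : c^2 + a^2 + b^2 = 3 * (d':ℤ)^2 := by linear_combination habc
    have negnorm : ∀ X Y Z : ℤ, X^2 + Y^2 + Z^2 = 3 * (d':ℤ)^2 →
        (X^2 + (-Y)^2 + (-Z)^2 = 3 * (d':ℤ)^2 ∧ X^2 + (-Y)^2 + Z^2 = 3 * (d':ℤ)^2) := by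
      intro X Y Z h
      exact ⟨by linear_combination h, by linear_combination h⟩
    -- instantiate H
    have H1pp := H a b c g1 n1
    have H1mm := H a (-b) (-c) (by rw [gneg2]; exact g1) (negnorm a b c n1).1
    have H1mp := H a (-b) c (by rw [gneg1]; exact g1) (negnorm a b c n1).2
    have H2pp := H b c a g2 n2
    have H2mm := H b (-c) (-a) (by rw [gneg2]; exact g2) (negnorm b c a n2).1
    have H2mp := H b (-c) a (by rw [gneg1]; exact g2) (negnorm b c a n2).2
    have H3pp := H c a b g3 n3
    have H3mm := H c (-a) (-b) (by rw [gneg2]; exact g3) (negnorm c a b n3).1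
    have H3mp := H c (-a) b (by rw [gneg1]; exact g3) (negnorm c a b n3).2
    -- rows
    obtain ⟨A1a, A1b, A1c⟩ := rowA hpZ h2Z H1pp.1 H1mm.1 H1mp.1
    obtain ⟨B1a, B1b, B1c⟩ := rowB hpZ h2Z H1pp.2.1 H1mm.2.1 H1mp.2.1
    obtain ⟨C1a, C1b, C1c⟩ := rowC hpZ h2Z H1pp.2.2 H1mm.2.2 H1mp.2.2
    obtain ⟨A2b, A2c, A2a⟩ := rowA hpZ h2Z H2pp.1 H2mm.1 H2mp.1
    obtain ⟨B2b, B2c, B2a⟩ := rowB hpZ h2Z H2pp.2.1 H2mm.2.1 H2mp.2.1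
    obtain ⟨C2b, C2c, C2a⟩ := rowC hpZ h2Z H2pp.2.2 H2mm.2.2 H2mp.2.2
    obtain ⟨A3c, A3a, A3b⟩ := rowA hpZ h2Z H3pp.1 H3mm.1 H3mp.1
    obtain ⟨B3c, B3a, B3b⟩ := rowB hpZ h2Z H3pp.2.1 H3mm.2.1 H3mp.2.1
    obtain ⟨C3c, C3a, C3b⟩ := rowC hpZ h2Z H3pp.2.2 H3mm.2.2 H3mp.2.2
    -- now p divides each matrix entry
    have m11 := dvd_of_three hpZ hgabc A1a A2b A3c
    have m12 := dvd_of_three hpZ hgabc A3a A1b A2c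
    have m13 := dvd_of_three hpZ hgabc A2a A3b A1c
    have m21 := dvd_of_three hpZ hgabc B1a B2b B3c
    have m22 := dvd_of_three hpZ hgabc B3a B1b B2c
    have m23 := dvd_of_three hpZ hgabc B2a B3b B1c
    have m31 := dvd_of_three hpZ hgabc C1a C2b C3c
    have m32 := dvd_of_three hpZ hgabc C3a C1b C2c
    have m33 := dvd_of_three hpZ hgabc C2a C3b C1c
    obtain ⟨hr, hs, ht, hu⟩ := all_entries_dvd hpZ h2Z m11 m12 m13 m21 m22 m23 m31 m32 m33
    have hsq : (p:ℤ)^2 ∣ (p:ℤ) := by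
      have h' : (p:ℤ)^2 ∣ r^2 + s^2 + t^2 + u^2 :=
        dvd_add (dvd_add (dvd_add (pow_dvd_pow_of_dvd hr 2) (pow_dvd_pow_of_dvd hs 2))
          (pow_dvd_pow_of_dvd ht 2)) (pow_dvd_pow_of_dvd hu 2)
      rwa [hN] at h'
    have hsq' : p^2 ∣ p := by exact_mod_cast hsq
    have hle : p^2 ≤ p := Nat.le_of_dvd hp.pos hsq'
    have hlt : p < p * p := (Nat.lt_mul_iff_one_lt_left hp.pos).mpr hp.one_lt
    rw [pow_two] at hle
    omega
  obtain ⟨x, y, z, ⟨hgxyz, hxyz⟩, hgQ⟩ := key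
  refine ⟨qA r s t u x y z, qB r s t u x y z, qC r s t u x y z, hgQ, ?_⟩
  have hnpd : (n:ℤ) = (p:ℤ) * (d':ℤ) := by exact_mod_cast hd'
  rw [q_norm, hN, hxyz, hnpd]; ring

lemma sq_emod_four (k : ℤ) : k^2 % 4 = 0 ∨ k^2 % 4 = 1 := by
  rcases Int.even_or_odd k with ⟨m, rfl⟩ | ⟨m, rfl⟩
  · left
    have e : (m + m)^2 = 4 * m^2 := by ring
    rw [e]
    exact Int.mul_emod_right 4 _
  · right
    have e : (2*m + 1)^2 = 1 + 4 * (m^2 + m) := by ring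
    rw [e, Int.add_mul_emod_self_left]
    decide

lemma odd_sq_emod_four {k : ℤ} (h : Odd k) : k^2 % 4 = 1 := by
  obtain ⟨m, rfl⟩ := h
  have e : (2*m + 1)^2 = 1 + 4 * (m^2 + m) := by ring
  rw [e, Int.add_mul_emod_self_left]
  decide

lemma first_ne_zero {x y z w : ℤ} (hw : Odd w) (h : x^2 + y^2 + z^2 = 3 * w^2) :
    x ≠ 0 := by
  intro h0
  subst h0
  have hy := sq_emod_four y
  have hz := sq_emod_four z
  have hw2 := odd_sq_emod_four hw
  have h' : y^2 + z^2 = 3 * w^2 := by linear_combination h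
  set Y := y^2
  set Z := z^2
  set W := w^2
  omega

lemma gabs (x y z : ℤ) : Int.gcd (Int.gcd |x| |y|) |z| = Int.gcd (Int.gcd x y) z := by
  simp [Int.gcd, Int.natAbs_abs]

end ThreeSquaresAux

/-- For every odd integer `d ≥ 1`, the equation `a² + b² + c² = 3d²` has a solution
in integers with `0 < a ≤ b ≤ c` and `gcd(a,b,c) = 1`. -/
theorem exists_solution_three_squares (d : ℤ) (hd : Odd d) (hd1 : 1 ≤ d) :
    ∃ a b c : ℤ, 0 < a ∧ a ≤ b ∧ b ≤ c ∧ Int.gcd (Int.gcd a b) c = 1 ∧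
      a ^ 2 + b ^ 2 + c ^ 2 = 3 * d ^ 2 := by
  obtain ⟨n, rfl⟩ : ∃ n : ℕ, d = (n : ℤ) :=
    ⟨d.toNat, (Int.toNat_of_nonneg (by linarith)).symm⟩
  have hnodd : Odd n := by exact_mod_cast hd
  obtain ⟨x, y, z, hg, hxyz⟩ := inner_three_squares n hnodd
  have hx0 : x ≠ 0 := first_ne_zero hd hxyz
  have hy0 : y ≠ 0 := first_ne_zero hd (by linear_combination hxyz : y^2 + x^2 + z^2 = 3 * (n:ℤ)^2)
  have hz0 : z ≠ 0 := first_ne_zero hd (by linear_combination hxyz : z^2 + x^2 + y^2 = 3 * (n:ℤ)^2)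
  have hxp : 0 < |x| := abs_pos.mpr hx0
  have hyp : 0 < |y| := abs_pos.mpr hy0
  have hzp : 0 < |z| := abs_pos.mpr hz0
  have hsq : |x|^2 + |y|^2 + |z|^2 = 3 * (n:ℤ)^2 := by
    rw [sq_abs, sq_abs, sq_abs]; exact hxyz
  have hgabs : Int.gcd (Int.gcd |x| |y|) |z| = 1 := by rw [gabs]; exact hg
  rcases le_total |x| |y| with h1 | h1
  · rcases le_total |y| |z| with h2 | h2
    · exact ⟨|x|, |y|, |z|, hxp, h1, h2, hgabs, by linear_combination hsq⟩
    · rcases le_total |x| |z| with h3 | h3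
      · refine ⟨|x|, |z|, |y|, hxp, h3, h2, ?_, by linear_combination hsq⟩
        exact ((grot |y| |x| |z|).trans (gswap |x| |y| |z|)).trans hgabs
      · refine ⟨|z|, |x|, |y|, hzp, h3, h1, ?_, by linear_combination hsq⟩
        exact ((grot |y| |z| |x|).trans (grot |x| |y| |z|)).trans hgabs
  · rcases le_total |x| |z| with h2 | h2
    · refine ⟨|y|, |x|, |z|, hyp, h1, h2, ?_, by linear_combination hsq⟩
      exact (gswap |x| |y| |z|).trans hgabs
    · rcases le_total |y| |z| with h3 | h3
      · refine ⟨|y|, |z|, |x|, hyp, h3, h2, ?_, by linear_combination hsq⟩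
        exact (grot |x| |y| |z|).trans hgabs
      · refine ⟨|z|, |y|, |x|, hzp, h3, h1, ?_, by linear_combination hsq⟩
        exact ((gswap |y| |z| |x|).trans (grot |x| |y| |z|)).trans hgabs
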